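/- For integers n ≥ 4 and 2 ≤ s ≤ n-1, IR(sP_n, 2K_2) ≤ sn + s + 1. -/

import Mathlib

open SimpleGraph

/-- The disjoint union of `s` copies of the graph `G`. -/
def SimpleGraph.Copies {β : Type*} (s : ℕ) (G : SimpleGraph β) :
    SimpleGraph (Fin s × β) where
  Adj x y := x.1 = y.1 ∧ G.Adj x.2 y.2
  symm := ⟨fun x y h => ⟨h.1.symm, h.2.symm⟩⟩
  loopless := ⟨fun x h => G.loopless.1 x.2 h.2⟩

/-- `F` strongly arrows `(G, H)`: every red-blue (`true`/`false`) colouring of the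
edges of `F` yields a red induced copy of `G` or a blue induced copy of `H`. -/
def StronglyArrows {α β γ : Type*}
    (F : SimpleGraph α) (G : SimpleGraph β) (H : SimpleGraph γ) : Prop :=
  ∀ c : Sym2 α → Bool,
    (∃ f : G ↪g F, ∀ a b : β, G.Adj a b → c s(f a, f b) = true) ∨
    (∃ f : H ↪g F, ∀ a b : γ, H.Adj a b → c s(f a, f b) = false)

/-- The induced Ramsey number `IR(G, H)`. -/
noncomputable def IR {β γ : Type*} (G : SimpleGraph β) (H : SimpleGraph γ) : ℕ :=
  sInf {n : ℕ | ∃ F : SimpleGraph (Fin n), StronglyArrows F G H}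

/-- The single-edge graph `K_2`. -/
def K2 : SimpleGraph (Fin 2) := ⊤

/-- Two disjoint edges `2K_2`. -/
def twoK2 : SimpleGraph (Fin 2 × Fin 2) := SimpleGraph.Copies 2 K2

/- ## Auxiliary material -/

private lemma int_dvd_bound {N : ℕ} {x : ℤ} (h : (N:ℤ) ∣ x) (h1 : 0 < x) (h2 : x < N) : False := by
  obtain ⟨k, hk⟩ := h
  rcases lt_trichotomy k 0 with hk0 | hk0 | hk0
  · nlinarith
  · subst hk0; simp at hk; omega
  · nlinarith

private lemma zmod_intCast_inj {N : ℕ} (hN : 11 ≤ N) {x y : ℤ} (hx : -5 ≤ x) (hx' : x ≤ 5)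
    (hy : -5 ≤ y) (hy' : y ≤ 5) (h : (x : ZMod N) = (y : ZMod N)) : x = y := by
  by_contra hne
  have hd : (N:ℤ) ∣ y - x := by
    rw [ZMod.intCast_eq_intCast_iff] at h
    exact h.dvd
  rcases lt_or_gt_of_ne (fun hxy => hne hxy) with hlt | hlt
  · exact int_dvd_bound hd (by omega) (by omega)
  · exact int_dvd_bound (dvd_neg.2 hd) (by omega) (by omega)

private lemma zmod_natCast_inj {N : ℕ} {a b : ℕ} (ha : a < N) (hb : b < N)
    (h : (a : ZMod N) = (b : ZMod N)) : a = b := by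
  have := congrArg ZMod.val h
  rwa [ZMod.val_cast_of_lt ha, ZMod.val_cast_of_lt hb] at this

private lemma add_mul_inj {m a b k l : ℕ} (hm : 0 < m) (ha : a < m) (hb : b < m)
    (h : k*m + a = l*m + b) : k = l ∧ a = b := by
  have h1 : (a + m*k)/m = (b + m*l)/m := by
    have : a + m*k = b + m*l := by linarith [h, Nat.mul_comm k m, Nat.mul_comm l m]
    rw [this]
  rw [Nat.add_mul_div_left _ _ hm, Nat.add_mul_div_left _ _ hm,
    Nat.div_eq_of_lt ha, Nat.div_eq_of_lt hb] at h1
  simp at h1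
  subst h1
  omega

/-- The cycle on `ZMod N`. -/
private def cyc (N : ℕ) : SimpleGraph (ZMod N) :=
  SimpleGraph.fromRel (fun a b => a + 1 = b)

private lemma cyc_adj {N : ℕ} {x y : ZMod N} :
    (cyc N).Adj x y ↔ x ≠ y ∧ (x + 1 = y ∨ y + 1 = x) := by
  simp [cyc, SimpleGraph.fromRel_adj]

private lemma main_arrows (n s : ℕ) (hn : 4 ≤ n) (hs1 : 2 ≤ s) :
    StronglyArrows (cyc (s*n+s+1)) (SimpleGraph.Copies s (SimpleGraph.pathGraph n)) twoK2 := by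
  set N := s*n+s+1 with hNdef
  have hsn : 8 ≤ s * n := le_trans (by norm_num) (Nat.mul_le_mul hs1 hn)
  have hN : 11 ≤ N := by omega
  intro c
  set blue : ZMod N → Prop := fun e => c s(e, e+1) = false with hbluedef
  by_cases hfar : ∃ a b : ZMod N, blue a ∧ blue b ∧
      ∀ d : ℤ, -2 ≤ d → d ≤ 2 → b ≠ a + (d : ZMod N)
  · -- blue induced 2K₂
    right
    obtain ⟨a, b, hba, hbb, hd⟩ := hfar
    have e0 : b ≠ a := by simpa using hd 0 (by norm_num) (by norm_num)
    have e1 : b ≠ a + 1 := by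
      have := hd 1 (by norm_num) (by norm_num); push_cast at this; exact this
    have e2 : b ≠ a + 2 := by
      have := hd 2 (by norm_num) (by norm_num); push_cast at this; exact this
    have em1 : a ≠ b + 1 := by
      have := hd (-1) (by norm_num) (by norm_num); push_cast at this
      intro h; exact this (by rw [h]; ring)
    have em2 : a ≠ b + 2 := by
      have := hd (-2) (by norm_num) (by norm_num); push_cast at this
      intro h; exact this (by rw [h]; ring)
    have one0 : (1 : ZMod N) ≠ 0 := by
      intro h
      have : ((1:ℕ) : ZMod N) = ((0:ℕ) : ZMod N) := by push_cast; exact h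
      have := zmod_natCast_inj (by omega) (by omega) this
      omega
    have self1 : ∀ x : ZMod N, x ≠ x + 1 := by
      intro x h
      apply one0
      have : x + 0 = x + 1 := by simpa using h
      exact (add_left_cancel this).symm
    set f : Fin 2 × Fin 2 → ZMod N := fun p =>
      if p.1 = 0 then (if p.2 = 0 then a else a + 1) else (if p.2 = 0 then b else b + 1)
      with hfdef
    have hinj : Function.Injective f := by
      rintro ⟨p1, p2⟩ ⟨q1, q2⟩ h
      fin_cases p1 <;> fin_cases p2 <;> fin_cases q1 <;> fin_cases q2 <;>
        simp only [hfdef] at h <;> norm_num at h <;>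
        first
          | rfl
          | exact absurd h one0
          | exact absurd h.symm one0
          | exact absurd h e0
          | exact absurd h.symm e0
          | exact absurd h (Ne.symm e0)
          | exact absurd h.symm (Ne.symm e0)
          | exact absurd h e1
          | exact absurd h.symm e1
          | exact absurd h (Ne.symm e1)
          | exact absurd h.symm (Ne.symm e1)
          | exact absurd h em1
          | exact absurd h.symm em1
          | exact absurd h (Ne.symm em1)
          | exact absurd h.symm (Ne.symm em1)
    refine ⟨⟨⟨f, hinj⟩, ?_⟩, ?_⟩
    · rintro ⟨p1, p2⟩ ⟨q1, q2⟩
      show (cyc N).Adj (f _) (f _) ↔ twoK2.Adj _ _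
      fin_cases p1 <;> fin_cases p2 <;> fin_cases q1 <;> fin_cases q2 <;>
        · simp only [hfdef, cyc_adj, twoK2, SimpleGraph.Copies, K2]
          try norm_num
          all_goals
            first
            | exact one0
            | (intro _
               constructor <;> intro hx <;>
                 first
                 | exact e0 (by linear_combination hx)
                 | exact e0 (by linear_combination -hx)
                 | exact e1 (by linear_combination hx)
                 | exact e1 (by linear_combination -hx)
                 | exact e2 (by linear_combination hx)
                 | exact e2 (by linear_combination -hx)
                 | exact em1 (by linear_combination hx)
                 | exact em1 (by linear_combination -hx)
                 | exact em2 (by linear_combination hx)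
                 | exact em2 (by linear_combination -hx))
    · rintro ⟨p1, p2⟩ ⟨q1, q2⟩ hadj
      have h1 : p1 = q1 := hadj.1
      have h2 : p2 ≠ q2 := hadj.2
      subst h1
      fin_cases p1 <;> fin_cases p2 <;> fin_cases q2 <;>
        first
        | exact absurd rfl h2
        | (simp only [hfdef]
           norm_num
           first
           | exact hba
           | exact hbb
           | (rw [Sym2.eq_swap]; exact hba)
           | (rw [Sym2.eq_swap]; exact hbb)
           | skip)
  · -- red induced sPₙ
    left
    push_neg at hfar
    obtain ⟨v, hv⟩ : ∃ v : ZMod N, ∀ e, blue e →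
        ∃ d : ℤ, 0 ≤ d ∧ d ≤ 2 ∧ e = v + (d : ZMod N) := by
      by_cases he : ∃ e, blue e
      · obtain ⟨e, hbe⟩ := he
        by_cases h2 : blue (e + 2)
        · refine ⟨e, fun f hbf => ?_⟩
          obtain ⟨d1, hd1a, hd1b, hd1⟩ := hfar e f hbe hbf
          obtain ⟨d2, hd2a, hd2b, hd2⟩ := hfar (e + 2) f h2 hbf
          have hc : ((d1 : ZMod N)) = ((d2 + 2 : ℤ) : ZMod N) := by
            have h' : e + (d1 : ZMod N) = e + ((d2 + 2 : ℤ) : ZMod N) := by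
              push_cast
              linear_combination hd1.symm.trans hd2
            exact add_left_cancel h'
          have hde : d1 = d2 + 2 :=
            zmod_intCast_inj hN (by omega) (by omega) (by omega) (by omega) hc
          exact ⟨d1, by omega, hd1b, hd1⟩
        · by_cases h1 : blue (e + 1)
          · refine ⟨e - 1, fun f hbf => ?_⟩
            obtain ⟨d1, hd1a, hd1b, hd1⟩ := hfar e f hbe hbf
            obtain ⟨d2, hd2a, hd2b, hd2⟩ := hfar (e + 1) f h1 hbf
            have hc : ((d1 : ZMod N)) = ((d2 + 1 : ℤ) : ZMod N) := by
              have h' : e + (d1 : ZMod N) = e + ((d2 + 1 : ℤ) : ZMod N) := by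
                push_cast
                linear_combination hd1.symm.trans hd2
              exact add_left_cancel h'
            have hde : d1 = d2 + 1 :=
              zmod_intCast_inj hN (by omega) (by omega) (by omega) (by omega) hc
            have hne2 : d1 ≠ 2 := by
              intro h
              apply h2
              have hfe : f = e + 2 := by rw [hd1, h]; push_cast; ring
              rwa [hfe] at hbf
            refine ⟨d1 + 1, by omega, by omega, ?_⟩
            rw [hd1]; push_cast; ring
          · refine ⟨e - 2, fun f hbf => ?_⟩
            obtain ⟨d1, hd1a, hd1b, hd1⟩ := hfar e f hbe hbf
            have hne2 : d1 ≠ 2 := by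
              intro h
              apply h2
              have hfe : f = e + 2 := by rw [hd1, h]; push_cast; ring
              rwa [hfe] at hbf
            have hne1 : d1 ≠ 1 := by
              intro h
              apply h1
              have hfe : f = e + 1 := by rw [hd1, h]; push_cast; ring
              rwa [hfe] at hbf
            refine ⟨d1 + 2, by omega, by omega, ?_⟩
            rw [hd1]; push_cast; ring
      · push_neg at he
        exact ⟨0, fun f hbf => absurd hbf (he f)⟩
    have hred : ∀ t : ℕ, t + 4 ≤ N →
        c s(v + 3 + (t : ZMod N), v + 3 + (t : ZMod N) + 1) = true := by
      intro t ht
      by_contra hfalse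
      rw [Bool.not_eq_true] at hfalse
      have hb : blue (v + 3 + (t : ZMod N)) := hfalse
      obtain ⟨d, hd0, hd2, hdf⟩ := hv _ hb
      have hz : (((t:ℤ) + 3 - d : ℤ) : ZMod N) = 0 := by
        push_cast
        linear_combination hdf
      rw [ZMod.intCast_zmod_eq_zero_iff_dvd] at hz
      exact int_dvd_bound hz (by omega) (by omega)
    set off : Fin s × Fin n → ℕ := fun p => p.1.val * (n+1) + p.2.val with hoffdef
    have hofflt : ∀ p : Fin s × Fin n, off p + 3 ≤ N := by
      rintro ⟨⟨p1, hp1⟩, ⟨p2, hp2⟩⟩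
      obtain ⟨s', rfl⟩ : ∃ s', s = s' + 1 := ⟨s - 1, by omega⟩
      have hb1 : p1 ≤ s' := by omega
      have hmul : p1 * (n+1) ≤ s' * (n+1) := Nat.mul_le_mul_right _ hb1
      have he1 : s' * (n+1) = s' * n + s' := by ring
      have he2 : (s' + 1) * n = s' * n + n := by ring
      simp only [hoffdef]
      simp only [hNdef]
      linarith [hmul, he1, he2, hp2]
    set g : Fin s × Fin n → ZMod N :=
      fun p => v + 3 + ((off p : ℕ) : ZMod N) with hgdef
    have hcast : ∀ p q : Fin s × Fin n,
        ((off p : ℕ) : ZMod N) = ((off q : ℕ) : ZMod N) → off p = off q := by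
      intro p q h
      exact zmod_natCast_inj (by have := hofflt p; omega) (by have := hofflt q; omega) h
    have hoffinj : ∀ p q : Fin s × Fin n, off p = off q → p = q := by
      rintro ⟨p1, p2⟩ ⟨q1, q2⟩ h
      simp only [hoffdef] at h
      have hp2 := p2.isLt
      have hq2 := q2.isLt
      obtain ⟨ha, hb⟩ := add_mul_inj (m := n+1) (by omega) (by omega) (by omega) h
      exact Prod.ext (Fin.ext ha) (Fin.ext hb)
    have hginj : Function.Injective g := by
      intro p q h
      simp only [hgdef] at h
      exact hoffinj p q (hcast p q (add_left_cancel h))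
    have hadj_off : ∀ p q : Fin s × Fin n, off p + 1 = off q →
        p.1 = q.1 ∧ p.2.val + 1 = q.2.val := by
      rintro ⟨p1, p2⟩ ⟨q1, q2⟩ h
      simp only [hoffdef] at h
      rw [Nat.add_assoc] at h
      have hp2 := p2.isLt
      have hq2 := q2.isLt
      obtain ⟨ha, hb⟩ := add_mul_inj (m := n+1) (by omega) (by omega) (by omega) h
      exact ⟨Fin.ext ha, hb⟩
    have key : ∀ p q : Fin s × Fin n, (g p + 1 = g q) ↔ (off p + 1 = off q) := by
      intro p q
      constructor
      · intro h
        have h' : v + 3 + ((off p + 1 : ℕ) : ZMod N) = v + 3 + ((off q : ℕ) : ZMod N) := by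
          simp only [hgdef] at h
          push_cast
          push_cast at h
          linear_combination h
        exact zmod_natCast_inj (by have := hofflt p; omega) (by have := hofflt q; omega)
          (add_left_cancel h')
      · intro h
        simp only [hgdef]
        rw [← h]
        push_cast
        ring
    have hoff_of_adj : ∀ p q : Fin s × Fin n, p.1 = q.1 → p.2.val + 1 = q.2.val →
        off p + 1 = off q := by
      rintro ⟨p1, p2⟩ ⟨q1, q2⟩ h1 h2
      simp only at h1 h2
      simp only [hoffdef]
      rw [Nat.add_assoc, h2, h1]
    refine ⟨⟨⟨g, hginj⟩, ?_⟩, ?_⟩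
    · intro p q
      show (cyc N).Adj (g p) (g q) ↔ (SimpleGraph.Copies s (SimpleGraph.pathGraph n)).Adj p q
      rw [cyc_adj]
      constructor
      · rintro ⟨hne, h | h⟩
        · obtain ⟨h1, h2⟩ := hadj_off p q ((key p q).1 h)
          exact ⟨h1, SimpleGraph.pathGraph_adj.2 (Or.inl h2)⟩
        · obtain ⟨h1, h2⟩ := hadj_off q p ((key q p).1 h)
          exact ⟨h1.symm, SimpleGraph.pathGraph_adj.2 (Or.inr h2)⟩
      · rintro ⟨h1, h2⟩
        rw [SimpleGraph.pathGraph_adj] at h2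
        have hneq : p ≠ q := by
          rintro rfl
          omega
        have hgne : g p ≠ g q := fun hh => hneq (hginj hh)
        rcases h2 with h2 | h2
        · exact ⟨hgne, Or.inl ((key p q).2 (hoff_of_adj p q h1 h2))⟩
        · exact ⟨hgne, Or.inr ((key q p).2 (hoff_of_adj q p h1.symm h2))⟩
    · intro p q hadj
      obtain ⟨h1, h2⟩ := hadj
      rw [SimpleGraph.pathGraph_adj] at h2
      show c s(g p, g q) = true
      rcases h2 with h2 | h2
      · have hq : g q = g p + 1 := ((key p q).2 (hoff_of_adj p q h1 h2)).symm
        rw [hq]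
        have hb : off p + 4 ≤ N := by
          have := hofflt q
          have := hoff_of_adj p q h1 h2
          omega
        exact hred (off p) hb
      · have hp : g p = g q + 1 := ((key q p).2 (hoff_of_adj q p h1.symm h2)).symm
        rw [hp, Sym2.eq_swap]
        have hb : off q + 4 ≤ N := by
          have := hofflt p
          have := hoff_of_adj q p h1.symm h2
          omega
        exact hred (off q) hb

theorem stmt8 (n s : ℕ) (hn : 4 ≤ n) (hs1 : 2 ≤ s) (hs2 : s ≤ n - 1) :
    IR (SimpleGraph.Copies s (SimpleGraph.pathGraph n)) twoK2 ≤ s * n + s + 1 := by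
  have harr := main_arrows n s hn hs1
  exact Nat.sInf_le ⟨cyc (s*n+s+1), harr⟩
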